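/- Let S be a reduced set of paths of length at least 2 in a finite quiver Q, and n ≥ 1. Every (n+m)-overlap w ∈ O_{n+m}(S) can be written as w = w'w'' where w' ∈ O_n(S) and (w'', v) ∈ QO_m(S) for some path v of positive length. -/

import Mathlib

universe u v

/-! Combinatorics of paths in a quiver: divisibility, overlaps, quasioverlaps. -/

/-- The type of all paths in a quiver `V`, bundled with their endpoints. -/
abbrev PathIn (V : Type u) [Quiver.{v + 1} V] : Type (max u (v + 1)) :=
  Σ a b : V, Quiver.Path a b

namespace PathIn

variable {V : Type u} [Quiver.{v + 1} V]

/-- Source of a bundled path. -/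
def src (p : PathIn V) : V := p.1

/-- Target of a bundled path. -/
def tgt (p : PathIn V) : V := p.2.1

/-- Length of a bundled path. -/
def len (p : PathIn V) : ℕ := p.2.2.length

/-- The path of length zero at a vertex. -/
def vert (a : V) : PathIn V := ⟨a, a, Quiver.Path.nil⟩

/-- Concatenation of bundled paths (junk value `p` if the endpoints do not match). -/
noncomputable def comp (p q : PathIn V) : PathIn V :=
  open Classical in
  if h : p.tgt = q.src then ⟨p.1, q.2.1, p.2.2.comp (q.2.2.cast h.symm rfl)⟩ else p

/-- `LDiv p q` : `p` divides `q` on the left, i.e. `q = p v` for some path `v`. -/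
def LDiv (p q : PathIn V) : Prop :=
  ∃ v : PathIn V, p.tgt = v.src ∧ q = p.comp v

/-- `RDiv p q` : `p` divides `q` on the right, i.e. `q = u p` for some path `u`. -/
def RDiv (p q : PathIn V) : Prop :=
  ∃ u : PathIn V, u.tgt = p.src ∧ q = u.comp p

/-- `Div p q` : `p` divides `q`, i.e. `q = u p v` for some paths `u, v`. -/
def Div (p q : PathIn V) : Prop :=
  ∃ u v : PathIn V, u.tgt = p.src ∧ p.tgt = v.src ∧ q = (u.comp p).comp v

/-- A set of paths is reduced if no element of it properly divides another element. -/
def Reduced (S : Set (PathIn V)) : Prop :=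
  ∀ q ∈ S, ∀ p ∈ S, p ≠ q → ¬ Div p q

/-- `p` is an `S`-path if some element of `S` divides it on the right. -/
def IsSPath (S : Set (PathIn V)) (p : PathIn V) : Prop :=
  ∃ s ∈ S, RDiv s p

/-- `q` `S`-vanishes `p` (written `q ∣_S p`): `p = q u` where no element of `S` divides `u`. -/
def SVan (S : Set (PathIn V)) (q p : PathIn V) : Prop :=
  ∃ u : PathIn V, q.tgt = u.src ∧ p = q.comp u ∧ ∀ s ∈ S, ¬ Div s u

/-- `q` almost `S`-vanishes `p` (written `q ∣_S^a p`): `p = q u`, `q` does not `S`-vanish `p`,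
and for every factorization `u = u₁ u₂` with `u₂` of positive length, `q` `S`-vanishes `q u₁`. -/
def ASVan (S : Set (PathIn V)) (q p : PathIn V) : Prop :=
  ∃ u : PathIn V, q.tgt = u.src ∧ p = q.comp u ∧ ¬ SVan S q p ∧
    ∀ u₁ u₂ : PathIn V, u₁.tgt = u₂.src → u = u₁.comp u₂ → 0 < u₂.len →
      SVan S q (q.comp u₁)

/-- The set of `n`-overlaps of a set of paths `S`. -/
def Overlaps (S : Set (PathIn V)) : ℕ → Set (PathIn V)
  | 0 => {p | p.len = 1}
  | 1 => S
  | (n + 2) => {w | ∃ w₁ ∈ Overlaps S (n + 1), ∃ w₂ ∈ Overlaps S n,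
      SVan S w₁ w ∧ ASVan S w₂ w}

/-- The set of `n`-quasioverlaps of a set of paths `S`: pairs `(w, v)` with `v` of
positive length. -/
def QOverlaps (S : Set (PathIn V)) : ℕ → Set (PathIn V × PathIn V)
  | 0 => {wv | wv.1.len = 0 ∧ 0 < wv.2.len ∧ wv.2.tgt = wv.1.src}
  | 1 => {wv | 0 < wv.1.len ∧ 0 < wv.2.len ∧ wv.2.tgt = wv.1.src ∧ wv.2.comp wv.1 ∈ S}
  | (n + 2) => {wv | ∃ w₁, (w₁, wv.2) ∈ QOverlaps S (n + 1) ∧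
      ∃ w₂, (w₂, wv.2) ∈ QOverlaps S n ∧ SVan S w₁ wv.1 ∧ ASVan S w₂ wv.1}

/-- `sup` of the lengths of the `n`-overlaps of `S`, in `EReal` (`-∞` if there are none). -/
noncomputable def maxo (S : Set (PathIn V)) (n : ℕ) : EReal :=
  sSup ((fun w => (w.len : EReal)) '' Overlaps S n)

/-- `inf` of the lengths of the `n`-overlaps of `S`, in `EReal` (`+∞` if there are none). -/
noncomputable def mino (S : Set (PathIn V)) (n : ℕ) : EReal :=
  sInf ((fun w => (w.len : EReal)) '' Overlaps S n)

/-- `sup` of the lengths of the first components of `n`-quasioverlaps of `S`. -/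
noncomputable def maxqo (S : Set (PathIn V)) (n : ℕ) : EReal :=
  sSup ((fun w => (w.len : EReal)) '' {w | ∃ v, (w, v) ∈ QOverlaps S n})

/-- `inf` of the lengths of the first components of `n`-quasioverlaps of `S`. -/
noncomputable def minqo (S : Set (PathIn V)) (n : ℕ) : EReal :=
  sInf ((fun w => (w.len : EReal)) '' {w | ∃ v, (w, v) ∈ QOverlaps S n})

end PathIn

namespace Quiver.Path

theorem split_suffix {V : Type u} [Quiver.{v + 1} V] {a c : V} :
    ∀ (k : ℕ) (w : Path a c), k ≤ w.length →
    ∃ (b : V) (p : Path a b) (q : Path b c), w = p.comp q ∧ q.length = k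
  | 0, w, _ => ⟨c, w, nil, rfl, rfl⟩
  | (k+1), nil, hk => by simp at hk
  | (k+1), cons w e, hk => by
    obtain ⟨b, p, q, rfl, hq⟩ := split_suffix k w (by simpa using hk)
    exact ⟨b, p, q.cons e, rfl, by simp [hq]⟩

theorem prefix_resolve {V : Type u} [Quiver.{v + 1} V] {a b c d : V}
    (p : Path a b) (q : Path a d) :
    ∀ (u' : Path d c) (u : Path b c), p.comp u = q.comp u' → u'.length ≤ u.length →
    ∃ t : Path b d, q = p.comp t ∧ u = t.comp u'
  | nil, u, h, _ => ⟨u, by simpa using h.symm, rfl⟩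
  | cons u' e, nil, h, hl => by simp at hl
  | cons u' e, cons u f, h, hl => by
    rw [comp_cons, comp_cons] at h
    obtain rfl := obj_eq_of_cons_eq_cons h
    have h1 : p.comp u = q.comp u' := eq_of_heq (heq_of_cons_eq_cons h)
    have h2 : f = e := eq_of_heq (hom_heq_of_cons_eq_cons h)
    obtain ⟨t, rfl, rfl⟩ := prefix_resolve p q u' u h1 (by simpa using hl)
    exact ⟨t, rfl, by rw [h2, comp_cons]⟩

theorem suffix_resolve {V : Type u} [Quiver.{v + 1} V] {a b c d : V}
    (u : Path a b) (u' : Path a d) :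
    ∀ (p : Path b c) (q : Path d c), u.comp p = u'.comp q → p.length ≤ q.length →
    ∃ t : Path d b, u = u'.comp t ∧ q = t.comp p
  | nil, q, h, _ => ⟨q, by simpa using h, rfl⟩
  | cons p f, nil, h, hl => by simp at hl
  | cons p f, cons q g, h, hl => by
    rw [comp_cons, comp_cons] at h
    obtain rfl := obj_eq_of_cons_eq_cons h
    have h1 : u.comp p = u'.comp q := eq_of_heq (heq_of_cons_eq_cons h)
    have h2 : f = g := eq_of_heq (hom_heq_of_cons_eq_cons h)
    obtain ⟨t, rfl, rfl⟩ := suffix_resolve u u' p q h1 (by simpa using hl)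
    exact ⟨t, rfl, by rw [h2, comp_cons]⟩

end Quiver.Path

namespace PathIn

variable {V : Type u} [Quiver.{v + 1} V]

@[simp] lemma src_mk {a b : V} (p : Quiver.Path a b) : src (⟨a, b, p⟩ : PathIn V) = a := rfl
@[simp] lemma tgt_mk {a b : V} (p : Quiver.Path a b) : tgt (⟨a, b, p⟩ : PathIn V) = b := rfl
@[simp] lemma len_mk {a b : V} (p : Quiver.Path a b) : len (⟨a, b, p⟩ : PathIn V) = p.length := rfl
@[simp] lemma src_vert (a : V) : (vert a).src = a := rfl
@[simp] lemma tgt_vert (a : V) : (vert a).tgt = a := rfl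
@[simp] lemma len_vert (a : V) : (vert a).len = 0 := rfl

lemma comp_mk {a b c : V} (p : Quiver.Path a b) (q : Quiver.Path b c) :
    comp ⟨a, b, p⟩ ⟨b, c, q⟩ = ⟨a, c, p.comp q⟩ := by
  have h : tgt (⟨a, b, p⟩ : PathIn V) = src (⟨b, c, q⟩ : PathIn V) := rfl
  rw [comp, dif_pos h]
  rfl

lemma mk_inj {a b c : V} {P : Quiver.Path a b} {P' : Quiver.Path a c}
    (h : (⟨a, b, P⟩ : PathIn V) = ⟨a, c, P'⟩) : b = c ∧ HEq P P' := by
  simpa using h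

lemma mk_eq_mk {a b b' : V} {P : Quiver.Path a b} {P' : Quiver.Path a b'}
    (h : b = b') (hp : HEq P P') : (⟨a, b, P⟩ : PathIn V) = ⟨a, b', P'⟩ := by
  subst h; rw [eq_of_heq hp]

lemma eq_vert_of_len_zero {p : PathIn V} (h : p.len = 0) : p = vert p.src := by
  obtain ⟨a, b, P⟩ := p
  obtain rfl := Quiver.Path.eq_of_length_zero P h
  obtain rfl := Quiver.Path.eq_nil_of_length_zero P h
  rfl

section comp
variable {p q r : PathIn V}

lemma src_comp (h : p.tgt = q.src) : (p.comp q).src = p.src := by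
  obtain ⟨a, b, P⟩ := p; obtain ⟨b', c, Q⟩ := q
  obtain rfl : b = b' := h
  rw [comp_mk]; rfl

lemma tgt_comp (h : p.tgt = q.src) : (p.comp q).tgt = q.tgt := by
  obtain ⟨a, b, P⟩ := p; obtain ⟨b', c, Q⟩ := q
  obtain rfl : b = b' := h
  rw [comp_mk]; rfl

lemma len_comp (h : p.tgt = q.src) : (p.comp q).len = p.len + q.len := by
  obtain ⟨a, b, P⟩ := p; obtain ⟨b', c, Q⟩ := q
  obtain rfl : b = b' := h
  rw [comp_mk]; simp

@[simp] lemma comp_vert (p : PathIn V) : p.comp (vert p.tgt) = p := by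
  obtain ⟨a, b, P⟩ := p
  rw [show vert (tgt (⟨a, b, P⟩ : PathIn V)) = ⟨b, b, Quiver.Path.nil⟩ from rfl, comp_mk]
  rfl

@[simp] lemma vert_comp (p : PathIn V) : (vert p.src).comp p = p := by
  obtain ⟨a, b, P⟩ := p
  rw [show vert (src (⟨a, b, P⟩ : PathIn V)) = ⟨a, a, Quiver.Path.nil⟩ from rfl, comp_mk]
  simp

lemma comp_assoc (h1 : p.tgt = q.src) (h2 : q.tgt = r.src) :
    (p.comp q).comp r = p.comp (q.comp r) := by
  obtain ⟨a, b, P⟩ := p; obtain ⟨b', c, Q⟩ := q; obtain ⟨c', d, R⟩ := r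
  obtain rfl : b = b' := h1; obtain rfl : c = c' := h2
  rw [comp_mk, comp_mk, comp_mk, comp_mk]
  simp

lemma comp_left_cancel (h : p.tgt = q.src) (h' : p.tgt = r.src)
    (heq : p.comp q = p.comp r) : q = r := by
  obtain ⟨a, b, P⟩ := p; obtain ⟨b', c, Q⟩ := q; obtain ⟨b'', c', R⟩ := r
  obtain rfl : b = b' := h; obtain rfl : b = b'' := h'
  rw [comp_mk, comp_mk] at heq
  obtain ⟨rfl, h2⟩ := mk_inj heq
  exact mk_eq_mk rfl (heq_of_eq (Quiver.Path.comp_inj_right.mp (eq_of_heq h2)))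

lemma comp_right_cancel (h : p.tgt = r.src) (h' : q.tgt = r.src)
    (heq : p.comp r = q.comp r) : p = q := by
  obtain ⟨a, b, P⟩ := p; obtain ⟨a', b', Q⟩ := q; obtain ⟨b'', c, R⟩ := r
  obtain rfl : b = b'' := h; obtain rfl : b' = b := h'
  rw [comp_mk, comp_mk] at heq
  have ha : a = a' := congrArg Sigma.fst heq
  subst ha
  obtain ⟨-, h2⟩ := mk_inj heq
  exact mk_eq_mk rfl (heq_of_eq (Quiver.Path.comp_inj_left.mp (eq_of_heq h2)))

/-- Split a bundled path at suffix length `k`. -/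
lemma split (p : PathIn V) (k : ℕ) (hk : k ≤ p.len) :
    ∃ q r : PathIn V, q.tgt = r.src ∧ p = q.comp r ∧ r.len = k ∧ q.len = p.len - k := by
  obtain ⟨a, c, P⟩ := p
  obtain ⟨b, q, r, rfl, hr⟩ := Quiver.Path.split_suffix k P hk
  refine ⟨⟨a, b, q⟩, ⟨b, c, r⟩, rfl, (comp_mk q r).symm, hr, ?_⟩
  simp [hr]

end comp

section div
variable {S : Set (PathIn V)} {p q r w u : PathIn V}

lemma ldiv_refl (p : PathIn V) : LDiv p p := ⟨vert p.tgt, rfl, (comp_vert p).symm⟩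

lemma rdiv_refl (p : PathIn V) : RDiv p p := ⟨vert p.src, rfl, (vert_comp p).symm⟩

lemma LDiv.len_le (h : LDiv p q) : p.len ≤ q.len := by
  obtain ⟨t, ht, rfl⟩ := h; rw [len_comp ht]; omega

lemma RDiv.len_le (h : RDiv p q) : p.len ≤ q.len := by
  obtain ⟨t, ht, rfl⟩ := h; rw [len_comp ht]; omega

lemma LDiv.eq_of_len_ge (h : LDiv p q) (hl : q.len ≤ p.len) : p = q := by
  obtain ⟨t, ht, rfl⟩ := h
  rw [len_comp ht] at hl
  have h0 : t = vert t.src := eq_vert_of_len_zero (by omega)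
  rw [h0, ← ht, comp_vert]

lemma ldiv_trans (h1 : LDiv p q) (h2 : LDiv q r) : LDiv p r := by
  obtain ⟨t, ht, rfl⟩ := h1
  obtain ⟨s, hs, rfl⟩ := h2
  have hts : t.tgt = s.src := by rw [tgt_comp ht] at hs; exact hs
  refine ⟨t.comp s, ?_, ?_⟩
  · rw [src_comp hts]; exact ht
  · rw [comp_assoc ht hts]

lemma RDiv.div (h : RDiv p q) : Div p q := by
  obtain ⟨t, ht, rfl⟩ := h
  refine ⟨t, vert p.tgt, ht, rfl, ?_⟩
  rw [show vert p.tgt = vert ((t.comp p).tgt) from by rw [tgt_comp ht], comp_vert]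

lemma LDiv.div (h : LDiv p q) : Div p q := by
  obtain ⟨t, ht, rfl⟩ := h
  exact ⟨vert p.src, t, rfl, ht, by rw [vert_comp]⟩

lemma Div.len_le (h : Div p q) : p.len ≤ q.len := by
  obtain ⟨x, y, hx, hy, rfl⟩ := h
  rw [len_comp (by rw [tgt_comp hx]; exact hy), len_comp hx]; omega

/-- If `p` divides `u` and `u` right-divides `w`, then `p` divides `w`. -/
lemma Div.of_rdiv (h : Div p u) (h2 : RDiv u w) : Div p w := by
  obtain ⟨x, y, hx, hy, rfl⟩ := h
  obtain ⟨z, hz, rfl⟩ := h2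
  have hxp : (x.comp p).tgt = y.src := by rw [tgt_comp hx]; exact hy
  have hzx : z.tgt = x.src := by rw [src_comp hxp, src_comp hx] at hz; exact hz
  have hzxp : z.tgt = (x.comp p).src := by rw [src_comp hx]; exact hzx
  refine ⟨z.comp x, y, by rw [tgt_comp hzx]; exact hx, hy, ?_⟩
  calc z.comp ((x.comp p).comp y)
      = (z.comp (x.comp p)).comp y := (comp_assoc hzxp hxp).symm
    _ = ((z.comp x).comp p).comp y := by rw [comp_assoc hzx hx]

lemma ldiv_comparable (h1 : LDiv p w) (h2 : LDiv q w) (hl : p.len ≤ q.len) : LDiv p q := by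
  obtain ⟨t, ht, rfl⟩ := h1
  obtain ⟨s, hs, heq⟩ := h2
  have hlen : s.len ≤ t.len := by
    have e1 := len_comp ht
    have e2 := len_comp hs
    rw [← heq] at e2
    omega
  clear hl
  obtain ⟨a, b, P⟩ := p; obtain ⟨b1, c1, T⟩ := t; obtain ⟨a2, b2, Q⟩ := q
  obtain ⟨b3, c3, Sp⟩ := s
  obtain rfl : b = b1 := ht; obtain rfl : b2 = b3 := hs
  rw [comp_mk, comp_mk] at heq
  have ha : a = a2 := congrArg Sigma.fst heq
  subst ha
  obtain ⟨hc, h2⟩ := mk_inj heq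
  subst hc
  have h2 : P.comp T = Q.comp Sp := eq_of_heq h2
  obtain ⟨t', ht', -⟩ := Quiver.Path.prefix_resolve P Q Sp T h2 (by simpa using hlen)
  exact ⟨⟨b, b2, t'⟩, rfl, by rw [comp_mk, ht']⟩

lemma rdiv_comparable (h1 : RDiv p w) (h2 : RDiv q w) (hl : p.len ≤ q.len) : RDiv p q := by
  obtain ⟨t, ht, rfl⟩ := h1
  obtain ⟨s, hs, heq⟩ := h2
  have hlen : p.len ≤ q.len := hl
  obtain ⟨a, b, T⟩ := t; obtain ⟨b1, c1, P⟩ := p; obtain ⟨b3, c3, Q⟩ := q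
  obtain ⟨a2, b2, Sp⟩ := s
  obtain rfl : b = b1 := ht; obtain rfl : b2 = b3 := hs
  rw [comp_mk, comp_mk] at heq
  have ha : a = a2 := congrArg Sigma.fst heq
  subst ha
  obtain ⟨hc, h2⟩ := mk_inj heq
  subst hc
  have h2 : T.comp P = Sp.comp Q := eq_of_heq h2
  obtain ⟨t', -, ht'⟩ := Quiver.Path.suffix_resolve T Sp P Q h2 (by simpa using hlen)
  exact ⟨⟨b2, b, t'⟩, rfl, by rw [comp_mk, ht']⟩

end div
end PathIn
namespace PathIn

variable {V : Type u} [Quiver.{v + 1} V]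
variable {S : Set (PathIn V)} {p q r w u a : PathIn V}

lemma SVan.ldiv (h : SVan S q p) : LDiv q p := by
  obtain ⟨t, ht, rfl, -⟩ := h; exact ⟨t, ht, rfl⟩

lemma ASVan.ldiv (h : ASVan S q p) : LDiv q p := by
  obtain ⟨t, ht, rfl, -⟩ := h; exact ⟨t, ht, rfl⟩

lemma svan_iff (h : p.tgt = u.src) :
    SVan S p (p.comp u) ↔ ∀ s ∈ S, ¬ Div s u := by
  constructor
  · rintro ⟨t, ht, heq, hdiv⟩
    obtain rfl : t = u := comp_left_cancel ht h heq.symm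
    exact hdiv
  · intro hdiv
    exact ⟨u, h, rfl, hdiv⟩

lemma svan_comp (ha : a.tgt = p.src) (ha' : a.tgt = q.src) :
    SVan S (a.comp p) (a.comp q) ↔ SVan S p q := by
  constructor
  · rintro ⟨t, ht, heq, hdiv⟩
    rw [tgt_comp ha] at ht
    rw [comp_assoc ha ht] at heq
    obtain rfl : q = p.comp t := comp_left_cancel ha' (by rw [src_comp ht]; exact ha) heq
    exact ⟨t, ht, rfl, hdiv⟩
  · rintro ⟨t, ht, rfl, hdiv⟩
    exact ⟨t, by rw [tgt_comp ha]; exact ht, (comp_assoc ha ht).symm, hdiv⟩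

lemma asvan_comp (ha : a.tgt = p.src) (ha' : a.tgt = q.src) :
    ASVan S (a.comp p) (a.comp q) ↔ ASVan S p q := by
  constructor
  · rintro ⟨t, ht, heq, hns, hmin⟩
    rw [tgt_comp ha] at ht
    rw [comp_assoc ha ht] at heq
    obtain rfl : q = p.comp t := comp_left_cancel ha' (by rw [src_comp ht]; exact ha) heq
    refine ⟨t, ht, rfl, fun hs => hns ((svan_comp ha ha').mpr hs), ?_⟩
    intro u1 u2 h12 hu hl
    have h1 : p.tgt = u1.src := by rw [hu] at ht; rw [src_comp h12] at ht; exact ht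
    have := hmin u1 u2 h12 hu hl
    rw [comp_assoc ha h1] at this
    exact (svan_comp ha (by rw [src_comp h1]; exact ha)).mp this
  · rintro ⟨t, ht, rfl, hns, hmin⟩
    refine ⟨t, by rw [tgt_comp ha]; exact ht, (comp_assoc ha ht).symm,
      fun hs => hns ((svan_comp ha ha').mp hs), ?_⟩
    intro u1 u2 h12 hu hl
    have h1 : p.tgt = u1.src := by rw [hu] at ht; rw [src_comp h12] at ht; exact ht
    have := hmin u1 u2 h12 hu hl
    rw [comp_assoc ha h1]
    exact (svan_comp ha (by rw [src_comp h1]; exact ha)).mpr this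

end PathIn
namespace PathIn

variable {V : Type u} [Quiver.{v + 1} V]
variable {S : Set (PathIn V)} {p q r w u a w₂ : PathIn V}

lemma asvan_extract (h : ASVan S w₂ w) : ∃ s ∈ S, RDiv s w ∧ s.len + w₂.len ≤ w.len := by
  obtain ⟨t, ht, rfl, hns, hmin⟩ := h
  have hdiv : ∃ s ∈ S, Div s t := by
    by_contra hmerde
    push_neg at hmerde
    exact hns ((svan_iff ht).mpr fun s hs => hmerde s hs)
  obtain ⟨s, hs, x, y, hx, hy, hty⟩ := hdiv
  have hxs : (x.comp s).tgt = y.src := by rw [tgt_comp hx]; exact hy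
  rcases Nat.eq_zero_or_pos y.len with hy0 | hy0
  · have hyv : y = vert ((x.comp s).tgt) := by
      rw [eq_vert_of_len_zero hy0]
      congr 1
      rw [hxs]
    rw [hyv, comp_vert] at hty
    have hw2x : w₂.tgt = x.src := by
      rw [hty] at ht; rw [src_comp hx] at ht; exact ht
    refine ⟨s, hs, ⟨w₂.comp x, by rw [tgt_comp hw2x]; exact hx, ?_⟩, ?_⟩
    · rw [hty, ← comp_assoc hw2x hx]
    · rw [len_comp ht, hty, len_comp hx]; omega
  · exfalso
    have hsv := hmin (x.comp s) y hxs hty hy0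
    have hw2xs : w₂.tgt = (x.comp s).src := by
      rw [hty] at ht; rw [src_comp hxs] at ht; exact ht
    exact (svan_iff hw2xs).mp hsv s hs (RDiv.div ⟨x, hx, rfl⟩)

lemma rdiv_unique (hred : Reduced S) {s s' : PathIn V} (hs : s ∈ S) (hs' : s' ∈ S)
    (h1 : RDiv s w) (h2 : RDiv s' w) : s = s' := by
  rcases Nat.le_total s.len s'.len with hl | hl
  · by_contra hne
    exact hred s' hs' s hs hne (rdiv_comparable h1 h2 hl).div
  · by_contra hne
    exact hred s hs s' hs' (Ne.symm hne) (rdiv_comparable h2 h1 hl).div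

lemma overlaps_len_pos (hS : ∀ p ∈ S, 2 ≤ p.len) :
    ∀ n, ∀ w ∈ Overlaps S n, 0 < w.len
  | 0, w, hw => by
    have : w.len = 1 := hw
    omega
  | 1, w, hw => by have := hS w hw; omega
  | (n+2), w, hw => by
    obtain ⟨w₁, h₁, w₂, h₂, hsv, hasv⟩ := hw
    obtain ⟨t, ht, rfl⟩ := hsv.ldiv
    have := overlaps_len_pos hS (n+1) w₁ h₁
    rw [len_comp ht]; omega

end PathIn
namespace PathIn

variable {V : Type u} [Quiver.{v + 1} V]

/-- `n`-overlaps that divide each other on the left coincide. -/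
def Ustmt (S : Set (PathIn V)) (n : ℕ) : Prop :=
  ∀ p q : PathIn V, p ∈ Overlaps S n → q ∈ Overlaps S n → LDiv p q → p = q

/-- Canonical decomposition of an `(n+1)`-overlap. -/
def Astmt (S : Set (PathIn V)) (n : ℕ) : Prop :=
  ∀ w ∈ Overlaps S (n + 1), ∃ w' u vv : PathIn V,
    w' ∈ Overlaps S n ∧ SVan S w' w ∧ w'.tgt = u.src ∧ w = w'.comp u ∧ 0 < u.len ∧
    0 < vv.len ∧ vv.tgt = u.src ∧ vv.comp u ∈ S ∧ RDiv vv w' ∧ RDiv (vv.comp u) w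

/-- No `n`-overlap almost-`S`-vanishes an `(n+1)`-overlap. -/
def Cstmt (S : Set (PathIn V)) (n : ℕ) : Prop :=
  ∀ w ∈ Overlaps S (n + 1), ∀ w₂ ∈ Overlaps S n, ¬ ASVan S w₂ w

theorem AUC {S : Set (PathIn V)} (hS : ∀ p ∈ S, 2 ≤ p.len) (hred : Reduced S) :
    ∀ n : ℕ, Ustmt S n ∧ Astmt S n ∧ Cstmt S n := by
  intro n
  induction n using Nat.strong_induction_on with
  | _ n ih =>
  have hU : Ustmt S n := by
    match n, ih with
    | 0, _ =>
      intro p q hp hq hld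
      have h1 : p.len = 1 := hp
      have h2 : q.len = 1 := hq
      exact hld.eq_of_len_ge (by omega)
    | 1, _ =>
      intro p q hp hq hld
      by_cases hne : p = q
      · exact hne
      · exact absurd hld.div (hred q hq p hp hne)
    | (k+2), ih =>
      intro p q hp hq hld
      rcases le_or_gt q.len p.len with hle | hlt
      · exact hld.eq_of_len_ge hle
      obtain ⟨p₁, h1p, p₂, h2p, hsvp, hasvp⟩ := hp
      obtain ⟨q₁, h1q, q₂, h2q, hsvq, hasvq⟩ := hq
      have hldp2 : LDiv p₂ q := ldiv_trans hasvp.ldiv hld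
      have hldq2 : LDiv q₂ q := hasvq.ldiv
      have hUk := (ih k (by omega)).1
      have hp2q2 : p₂ = q₂ := by
        rcases Nat.le_total p₂.len q₂.len with h | h
        · exact hUk p₂ q₂ h2p h2q (ldiv_comparable hldp2 hldq2 h)
        · exact (hUk q₂ p₂ h2q h2p (ldiv_comparable hldq2 hldp2 h)).symm
      obtain ⟨s, hs, hrs, hlen⟩ := asvan_extract hasvp
      obtain ⟨t, ht, hpt⟩ := hasvp.ldiv
      obtain ⟨rr, hr, hqr⟩ := hld
      have hplen : p.len = p₂.len + t.len := by rw [hpt, len_comp ht]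
      have hqlen : q.len = p.len + rr.len := by rw [hqr, len_comp hr]
      have hrt : RDiv t p := ⟨p₂, ht, hpt⟩
      have hst : RDiv s t := rdiv_comparable hrs hrt (by omega)
      obtain ⟨uq, huq, hquq, hnsq, hminq⟩ := hasvq
      have htr : t.tgt = rr.src := by rw [hpt, tgt_comp ht] at hr; exact hr
      have hq2t : q₂.tgt = t.src := by rw [← hp2q2]; exact ht
      have hqq : q = q₂.comp (t.comp rr) := by
        rw [hqr, hpt, hp2q2, comp_assoc hq2t htr]
      have huq' : uq = t.comp rr := by
        apply comp_left_cancel huq (by rw [src_comp htr]; exact hq2t)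
        rw [← hquq, ← hqq]
      have hmins := hminq t rr htr huq' (by omega)
      exact absurd hst.div ((svan_iff hq2t).mp hmins s hs)
  have hA : Astmt S n := by
    match n, ih with
    | 0, _ =>
      intro w hw
      have hw2 : 2 ≤ w.len := hS w hw
      obtain ⟨w', u, hwu, hsplit, hul, hwl⟩ := split w (w.len - 1) (by omega)
      have hw'1 : w'.len = 1 := by omega
      have hrw : RDiv (w'.comp u) w := by rw [hsplit]; exact rdiv_refl _
      refine ⟨w', u, w', hw'1, ⟨u, hwu, hsplit, ?_⟩, hwu, hsplit, by omega, by omega,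
        hwu, by rw [← hsplit]; exact hw, rdiv_refl _, hrw⟩
      intro s hs hdiv
      have hDsw : Div s w := hdiv.of_rdiv ⟨w', hwu, hsplit⟩
      have hne : s ≠ w := by
        have := hdiv.len_le
        intro h; rw [h] at this; omega
      exact hred w hw s hs hne hDsw
    | (k+1), ih =>
      intro w hw
      obtain ⟨w₁, h₁, w₂, h₂, hsv, hasv⟩ := hw
      obtain ⟨u, hu, hwu, hufree⟩ := hsv
      have hul : 0 < u.len := by
        rcases Nat.eq_zero_or_pos u.len with h0 | h0
        · exfalso
          have huv : u = vert w₁.tgt := by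
            rw [eq_vert_of_len_zero h0]; congr 1; exact hu.symm
          rw [huv, comp_vert] at hwu
          rw [hwu] at hasv
          exact (ih k (by omega)).2.2 w₁ h₁ w₂ h₂ hasv
        · exact h0
      obtain ⟨s, hs, hrs, hlen⟩ := asvan_extract hasv
      have hru : RDiv u w := ⟨w₁, hu, hwu⟩
      have hwlen : w.len = w₁.len + u.len := by rw [hwu, len_comp hu]
      have hsu_len : u.len < s.len := by
        rcases Nat.lt_or_ge u.len s.len with h | h
        · exact h
        · exact absurd (rdiv_comparable hrs hru h).div (hufree s hs)
      obtain ⟨vv, hv, hsvu⟩ := rdiv_comparable hru hrs (by omega)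
      have hvlen : 0 < vv.len := by
        have := len_comp hv; rw [← hsvu] at this; omega
      obtain ⟨y, hy, hwy⟩ := id hrs
      have hyv : y.tgt = vv.src := by rw [hsvu, src_comp hv] at hy; exact hy
      have hw1 : w₁ = y.comp vv := by
        apply comp_right_cancel hu (by rw [tgt_comp hyv]; exact hv)
        rw [← hwu, hwy, hsvu, ← comp_assoc hyv hv]
      exact ⟨w₁, u, vv, h₁, ⟨u, hu, hwu, hufree⟩, hu, hwu, hul, hvlen, hv,
        hsvu ▸ hs, ⟨y, hyv, hw1⟩, hsvu ▸ hrs⟩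
  refine ⟨hU, hA, ?_⟩
  intro w hw w₂ h₂ hasv
  obtain ⟨w', u, vv, h', hsv', hu', hwu', hul', hvl', hvu', hvuS, hrvw', hrvuw⟩ := hA w hw
  obtain ⟨s, hs, hrs, hlen⟩ := asvan_extract hasv
  have hseq : s = vv.comp u := rdiv_unique hred hs hvuS hrs hrvuw
  have hldw' : LDiv w' w := ⟨u, hu', hwu'⟩
  have hw2w' : w₂ = w' := by
    rcases Nat.le_total w₂.len w'.len with h | h
    · exact hU w₂ w' h₂ h' (ldiv_comparable hasv.ldiv hldw' h)
    · exact (hU w' w₂ h' h₂ (ldiv_comparable hldw' hasv.ldiv h)).symm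
  have e1 : s.len = vv.len + u.len := by rw [hseq, len_comp hvu']
  have e2 : w.len = w'.len + u.len := by rw [hwu', len_comp hu']
  rw [hw2w'] at hlen
  omega

end PathIn
namespace PathIn

variable {V : Type u} [Quiver.{v + 1} V]

lemma rdiv_comp_right {p q r : PathIn V} (h : RDiv p q) (hp : p.tgt = r.src)
    (hq : q.tgt = r.src) : RDiv (p.comp r) (q.comp r) := by
  obtain ⟨z, hz, rfl⟩ := h
  refine ⟨z, by rw [src_comp hp]; exact hz, comp_assoc hz hp⟩

theorem Tstar {S : Set (PathIn V)} (hS : ∀ p ∈ S, 2 ≤ p.len) (hred : Reduced S) :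
    ∀ m : ℕ, 1 ≤ m → ∀ n : ℕ, 1 ≤ n → ∀ w ∈ Overlaps S (n + m),
    ∃ a w'' u₁ vv : PathIn V,
      a ∈ Overlaps S n ∧ a.tgt = w''.src ∧ w = a.comp w'' ∧
      (w'', vv) ∈ QOverlaps S m ∧ 0 < vv.len ∧ 0 < u₁.len ∧ a.tgt = u₁.src ∧
      a.comp u₁ ∈ Overlaps S (n + 1) ∧ LDiv (a.comp u₁) w ∧ vv.tgt = u₁.src ∧
      vv.comp u₁ ∈ S ∧ RDiv vv a := by
  intro m
  induction m using Nat.strong_induction_on with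
  | _ m ihm =>
  intro hm n hn w hw
  match m, hm, ihm, hw with
  | 1, _, _, hw =>
    obtain ⟨a, u, vv, ha, hsv, hau, hwau, hul, hvl, hvu, hvuS, hrva, -⟩ :=
      (AUC hS hred n).2.1 w hw
    refine ⟨a, u, u, vv, ha, hau, hwau, ⟨hul, hvl, hvu, hvuS⟩, hvl, hul, hau, ?_, ?_,
      hvu, hvuS, hrva⟩
    · rw [← hwau]; exact hw
    · rw [← hwau]; exact ldiv_refl w
  | (k+2), _, ihm, hw =>
    have hidx : n + (k + 2) = (n + k) + 2 := by omega
    rw [hidx] at hw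
    obtain ⟨w₁, h₁, w₂, h₂, hsv, hasv⟩ := hw
    have h₁' : w₁ ∈ Overlaps S (n + (k + 1)) := by rw [show n + (k+1) = (n+k)+1 by omega]; exact h₁
    obtain ⟨a, w₁'', u₁, vv, ha, haw1, hw1eq, hQ1, hvl, hul, hau1, haou1, hldau1w1,
      hvu1, hvu1S, hrva⟩ := ihm (k+1) (by omega) (by omega) n hn w₁ h₁'
    obtain ⟨uw, huw, hweq, hufree⟩ := hsv
    have h1'' : w₁''.tgt = uw.src := by rw [hw1eq, tgt_comp haw1] at huw; exact huw
    have hweq2 : w = a.comp (w₁''.comp uw) := by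
      rw [hweq, hw1eq, comp_assoc haw1 h1'']
    have haw'' : a.tgt = (w₁''.comp uw).src := by rw [src_comp h1'']; exact haw1
    have hldw1w : LDiv w₁ w := ⟨uw, huw, hweq⟩
    have hldaw : LDiv a w := ldiv_trans ⟨w₁'', haw1, hw1eq⟩ hldw1w
    have hldau1w : LDiv (a.comp u₁) w := ldiv_trans hldau1w1 hldw1w
    have hsv'' : SVan S w₁'' (w₁''.comp uw) := ⟨uw, h1'', rfl, hufree⟩
    have hUn := (AUC hS hred n).1
    have hldw2w : LDiv w₂ w := hasv.ldiv
    match k, h₂, ihm with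
    | 0, h₂, _ =>
      have hw2a : w₂ = a := by
        rcases Nat.le_total w₂.len a.len with h | h
        · exact hUn w₂ a h₂ ha (ldiv_comparable hldw2w hldaw h)
        · exact (hUn a w₂ ha h₂ (ldiv_comparable hldaw hldw2w h)).symm
      have hasv'' : ASVan S (vert a.tgt) (w₁''.comp uw) := by
        have : ASVan S (a.comp (vert a.tgt)) (a.comp (w₁''.comp uw)) := by
          rw [comp_vert a, ← hweq2, ← hw2a]; exact hasv
        exact (asvan_comp (p := vert a.tgt) rfl haw'').mp this
      refine ⟨a, w₁''.comp uw, u₁, vv, ha, haw'', hweq2,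
        ⟨w₁'', hQ1, vert a.tgt, ⟨rfl, hvl, hvu1.trans hau1.symm⟩, hsv'', hasv''⟩,
        hvl, hul, hau1, haou1, hldau1w, hvu1, hvu1S, hrva⟩
    | (j+1), h₂, ihm =>
      have h₂' : w₂ ∈ Overlaps S (n + (j + 1)) := by
        rw [show n + (j+1) = n+j+1 by omega]; exact h₂
      obtain ⟨b, w₂'', u₁', vv', hb, hbw2, hw2eq, hQ2, hvl', hul', hbu1', hbou1',
        hldbu1'w2, hvu1', hv'u1'S, hrv'b⟩ := ihm (j+1) (by omega) (by omega) n hn w₂ h₂'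
      have hba : b = a := by
        have hldbw : LDiv b w := ldiv_trans ⟨w₂'', hbw2, hw2eq⟩ hldw2w
        rcases Nat.le_total b.len a.len with h | h
        · exact hUn b a hb ha (ldiv_comparable hldbw hldaw h)
        · exact (hUn a b ha hb (ldiv_comparable hldaw hldbw h)).symm
      subst hba
      have hUn1 := (AUC hS hred (n+1)).1
      have hbu1'w : LDiv (b.comp u₁') w :=
        ldiv_trans hldbu1'w2 hldw2w
      have hcomp_eq : b.comp u₁ = b.comp u₁' := by
        rcases Nat.le_total (b.comp u₁).len (b.comp u₁').len with h | h
        · exact hUn1 _ _ haou1 hbou1' (ldiv_comparable hldau1w hbu1'w h)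
        · exact (hUn1 _ _ hbou1' haou1 (ldiv_comparable hbu1'w hldau1w h)).symm
      have hu1eq : u₁ = u₁' := comp_left_cancel hau1 hbu1' hcomp_eq
      subst hu1eq
      have hveq : vv = vv' := by
        have h1 : RDiv (vv.comp u₁) (b.comp u₁) := rdiv_comp_right hrva hvu1 hau1
        have h2 : RDiv (vv'.comp u₁) (b.comp u₁) := rdiv_comp_right hrv'b hvu1' hau1
        have := rdiv_unique hred hvu1S hv'u1'S h1 h2
        exact comp_right_cancel hvu1 hvu1' this
      subst hveq
      have hasv'' : ASVan S w₂'' (w₁''.comp uw) := by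
        have : ASVan S (b.comp w₂'') (b.comp (w₁''.comp uw)) := by
          rw [← hweq2, ← hw2eq]; exact hasv
        exact (asvan_comp hbw2 haw'').mp this
      exact ⟨b, w₁''.comp uw, u₁, vv, ha, haw'', hweq2,
        ⟨w₁'', hQ1, w₂'', hQ2, hsv'', hasv''⟩,
        hvl, hul, hau1, haou1, hldau1w, hvu1, hvu1S, hrva⟩

end PathIn
/-- every `(n+m)`-overlap `w` can be written as `w = w' w''` with `w'` an
`n`-overlap and `(w'', v)` an `m`-quasioverlap for some path `v` of positive length. -/
theorem overlap_factors_overlap_quasioverlap {V : Type u} [Quiver.{v + 1} V]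
    [Fintype V] [∀ a b : V, Fintype (a ⟶ b)]
    (S : Set (PathIn V)) (hS : ∀ p ∈ S, 2 ≤ p.len) (hred : PathIn.Reduced S)
    (n m : ℕ) (hn : 1 ≤ n) (w : PathIn V) (hw : w ∈ PathIn.Overlaps S (n + m)) :
    ∃ w' w'' vpath : PathIn V, w' ∈ PathIn.Overlaps S n ∧ 0 < vpath.len ∧
      (w'', vpath) ∈ PathIn.QOverlaps S m ∧
      w'.tgt = w''.src ∧ w = w'.comp w'' := by
  rcases Nat.eq_zero_or_pos m with rfl | hm
  · refine ⟨w, PathIn.vert w.tgt, w, hw, PathIn.overlaps_len_pos hS n w hw,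
      ⟨rfl, PathIn.overlaps_len_pos hS n w hw, rfl⟩, rfl, (PathIn.comp_vert w).symm⟩
  · obtain ⟨a, w'', u₁, vv, ha, haw, hweq, hQ, hvl, -⟩ :=
      PathIn.Tstar hS hred m hm n hn w hw
    exact ⟨a, w'', vv, ha, hvl, hQ, haw, hweq⟩
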